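/- Assume: (A1) σ : ℝ×[0,T] → ℝ is bounded, bounded away from zero and Lipschitz continuous; (A4') there exist a bounded classical solution w of D_t w + (σ²(x,t)/2)·D_x² w + 1 = 0 on (0,+∞)×[0,T) with w = 0 on the parabolic boundary, and L>0 with |w(x,t) − w(x̄,t)| ≤ L|x−x̄| for all x,x̄ ≥ 0, t ∈ [0,T]. Then there exists a constant M>0 such that for all κ>1 and for all functions f : ℝ×[0,T] → ℝ that are bounded and Hölder continuous on compact subsets, every bounded classical solution u_f ∈ C^{2,1}((0,+∞)×[0,T)) ∩ C([0,+∞)×[0,T]) of D_t u + (σ²(x,t)/2)·D_x² u + f(x,t) = 0 on (0,+∞)×[0,T) with u = 0 on the parabolic boundary has bounded D_x u_f and satisfies ‖u_f‖_κ ≤ (M/κ^{1/3})·‖f‖_κ^{0,ℝ}. -/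

import Mathlib

open Set

/-- Partial derivative in the space variable `x`. -/
noncomputable def Dx (u : ℝ → ℝ → ℝ) (x t : ℝ) : ℝ := deriv (fun y => u y t) x

/-- Second partial derivative in the space variable `x`. -/
noncomputable def Dxx (u : ℝ → ℝ → ℝ) (x t : ℝ) : ℝ := deriv (fun y => Dx u y t) x

/-- Partial derivative in the time variable `t`. -/
noncomputable def Dt (u : ℝ → ℝ → ℝ) (x t : ℝ) : ℝ := deriv (fun s => u x s) t

/-- The parabolic boundary ∂ₚ((0,∞)×[0,T)) = ([0,∞)×{T}) ∪ ({0}×[0,T]). -/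
def parabBdry (T : ℝ) : Set (ℝ × ℝ) := (Ici 0 ×ˢ {T}) ∪ ({0} ×ˢ Icc 0 T)

/-- `u ∈ C^{2,1}((0,∞)×[0,T)) ∩ C([0,∞)×[0,T])`: continuity on the closed domain, and
existence plus continuity of `D_x u`, `D_x² u`, `D_t u` on `(0,∞)×[0,T)`. -/
def RegC21 (T : ℝ) (u : ℝ → ℝ → ℝ) : Prop :=
  ContinuousOn (fun p : ℝ × ℝ => u p.1 p.2) (Ici 0 ×ˢ Icc 0 T) ∧
  (∀ x ∈ Ioi (0:ℝ), ∀ t ∈ Ico (0:ℝ) T,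
    DifferentiableAt ℝ (fun y => u y t) x ∧
    DifferentiableAt ℝ (fun y => Dx u y t) x ∧
    DifferentiableAt ℝ (fun s => u x s) t) ∧
  ContinuousOn (fun p : ℝ × ℝ => Dx u p.1 p.2) (Ioi 0 ×ˢ Ico 0 T) ∧
  ContinuousOn (fun p : ℝ × ℝ => Dxx u p.1 p.2) (Ioi 0 ×ˢ Ico 0 T) ∧
  ContinuousOn (fun p : ℝ × ℝ => Dt u p.1 p.2) (Ioi 0 ×ˢ Ico 0 T)

/-- (A1): `σ` is bounded, bounded away from zero and Lipschitz continuous on `ℝ×[0,T]`. -/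
def CondA1 (T : ℝ) (σ : ℝ → ℝ → ℝ) : Prop :=
  (∃ C, ∀ x : ℝ, ∀ t ∈ Icc (0:ℝ) T, |σ x t| ≤ C) ∧
  (∃ m > 0, ∀ x : ℝ, ∀ t ∈ Icc (0:ℝ) T, m ≤ |σ x t|) ∧
  (∃ L > 0, ∀ x x' : ℝ, ∀ t ∈ Icc (0:ℝ) T, ∀ t' ∈ Icc (0:ℝ) T,
    |σ x t - σ x' t'| ≤ L * (|x - x'| + |t - t'|))

/-- (A2): `β` is bounded and Lipschitz continuous on the parabolic boundary. -/
def CondA2 (T : ℝ) (β : ℝ → ℝ → ℝ) : Prop :=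
  (∃ C, ∀ p ∈ parabBdry T, |β p.1 p.2| ≤ C) ∧
  (∃ L > 0, ∀ p ∈ parabBdry T, ∀ q ∈ parabBdry T,
    |β p.1 p.2 - β q.1 q.2| ≤ L * (|p.1 - q.1| + |p.2 - q.2|))

/-- (A3): `H` is Lipschitz continuous on compact subsets of `ℝ³×[0,T]`, has linear growth
in `(p,u)` and is uniformly Lipschitz in `(p,u)`. -/
def CondA3 (T : ℝ) (H : ℝ → ℝ → ℝ → ℝ → ℝ) : Prop :=
  (∀ U : Set (ℝ × ℝ × ℝ × ℝ), IsCompact U → (∀ q ∈ U, q.2.2.2 ∈ Icc (0:ℝ) T) →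
    ∃ L > 0, ∀ q ∈ U, ∀ q' ∈ U,
      |H q.1 q.2.1 q.2.2.1 q.2.2.2 - H q'.1 q'.2.1 q'.2.2.1 q'.2.2.2| ≤
        L * (|q.1 - q'.1| + |q.2.1 - q'.2.1| + |q.2.2.1 - q'.2.2.1| + |q.2.2.2 - q'.2.2.2|)) ∧
  (∃ K > 0,
    (∀ p u x : ℝ, ∀ t ∈ Icc (0:ℝ) T, |H p u x t| ≤ K * (1 + |u| + |p|)) ∧
    (∀ p p' u u' x : ℝ, ∀ t ∈ Icc (0:ℝ) T,
      |H p u x t - H p' u' x t| ≤ K * (|u - u'| + |p - p'|)))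

/-- (A4'): there is a bounded classical solution `w` of
`D_t w + (σ²/2)·D_x² w + 1 = 0` on `(0,∞)×[0,T)` vanishing on the parabolic boundary,
which is Lipschitz continuous in `x` uniformly in `t`. -/
def CondA4' (T : ℝ) (σ : ℝ → ℝ → ℝ) : Prop :=
  ∃ w : ℝ → ℝ → ℝ,
    RegC21 T w ∧
    (∃ C, ∀ x ∈ Ici (0:ℝ), ∀ t ∈ Icc (0:ℝ) T, |w x t| ≤ C) ∧
    (∀ x ∈ Ioi (0:ℝ), ∀ t ∈ Ico (0:ℝ) T,
      Dt w x t + σ x t ^ 2 / 2 * Dxx w x t + 1 = 0) ∧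
    (∀ p ∈ parabBdry T, w p.1 p.2 = 0) ∧
    (∃ L > 0, ∀ x ∈ Ici (0:ℝ), ∀ x' ∈ Ici (0:ℝ), ∀ t ∈ Icc (0:ℝ) T,
      |w x t - w x' t| ≤ L * |x - x'|)


/-- Hölder continuity on compact subsets of a set `O ⊆ ℝ²`. -/
def HolderOnCompacts (O : Set (ℝ × ℝ)) (f : ℝ → ℝ → ℝ) : Prop :=
  ∀ U ⊆ O, IsCompact U → ∃ L > 0, ∃ l ∈ Ioc (0:ℝ) 1,
    ∀ p ∈ U, ∀ q ∈ U, |f p.1 p.2 - f q.1 q.2| ≤ L * ‖p - q‖ ^ l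

/-- Weighted norm estimate `‖u_f‖_κ ≤ (M/κ^{1/3})·‖f‖_κ^{0,ℝ}`: under (A1) and (A4')
there is `M > 0` such that for every `κ > 1`, every bounded source `f` which is Hölder
continuous on compact subsets of `ℝ×[0,T]`, and every bounded classical solution `u` of
`D_t u + (σ²/2)·D_x² u + f = 0` on `(0,∞)×[0,T)` vanishing on the parabolic boundary,
`D_x u` is bounded and the sum of the weighted sup norms of `u` and `D_x u` is bounded by
`(M/κ^{1/3})·N` for every upper bound `N` of the weighted values of `f`. -/


private lemma derivNonposOfRightMax {g : ℝ → ℝ} {d t0 b : ℝ} (hd : HasDerivAt g d t0)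
    (htb : t0 < b) (hmax : ∀ t ∈ Icc t0 b, g t ≤ g t0) : d ≤ 0 := by
  have hslope := hasDerivAt_iff_tendsto_slope.1 hd
  have h2 : Filter.Tendsto (slope g t0) (nhdsWithin t0 (Ioi t0)) (nhds d) :=
    hslope.mono_left (nhdsWithin_mono _ fun x hx => ne_of_gt hx)
  refine le_of_tendsto h2 ?_
  filter_upwards [Ioo_mem_nhdsGT_of_mem (Set.mem_Ico.2 ⟨le_refl t0, htb⟩)] with s hs
  have h3 : g s - g t0 ≤ 0 := sub_nonpos.2 (hmax s ⟨hs.1.le, hs.2.le⟩)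
  have h4 : 0 < s - t0 := sub_pos.2 hs.1
  rw [slope_def_field]
  exact div_nonpos_of_nonpos_of_nonneg h3 h4.le

private lemma secondDerivNonposOfLocalMax {h h' : ℝ → ℝ} {x0 d2 : ℝ}
    (hmax : IsLocalMax h x0) (hh' : ∀ᶠ y in nhds x0, HasDerivAt h (h' y) y)
    (hd2 : HasDerivAt h' d2 x0) : d2 ≤ 0 := by
  by_contra hcon
  push_neg at hcon
  have h0 : h' x0 = 0 := by
    have hde : deriv h x0 = h' x0 := hh'.self_of_nhds.deriv
    rw [← hde]; exact hmax.deriv_eq_zero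
  have hslope := hasDerivAt_iff_tendsto_slope.1 hd2
  have h2 : Filter.Tendsto (slope h' x0) (nhdsWithin x0 (Ioi x0)) (nhds d2) :=
    hslope.mono_left (nhdsWithin_mono _ fun y hy => ne_of_gt hy)
  have hev : ∀ᶠ y in nhdsWithin x0 (Ioi x0), 0 < h' y := by
    have h3 := h2.eventually (eventually_gt_nhds hcon)
    filter_upwards [h3, self_mem_nhdsWithin] with y hy hy2
    have hs : slope h' x0 y = (h' y - h' x0) / (y - x0) := slope_def_field h' x0 y
    rw [hs, h0, sub_zero] at hy
    have h4 : 0 < y - x0 := sub_pos.2 hy2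
    have := mul_pos hy h4
    rw [div_mul_cancel₀] at this
    · linarith
    · exact ne_of_gt h4
  have hev2 : ∀ᶠ y in nhdsWithin x0 (Ioi x0), HasDerivAt h (h' y) y ∧ h y ≤ h x0 :=
    (hh'.and hmax).filter_mono nhdsWithin_le_nhds
  obtain ⟨b, hb, hsub⟩ := mem_nhdsGT_iff_exists_Ioc_subset.1 (hev.and hev2)
  have hmono : StrictMonoOn h (Icc x0 b) := by
    apply strictMonoOn_of_deriv_pos (convex_Icc x0 b)
    · intro y hy
      rcases eq_or_lt_of_le hy.1 with rfl | hlt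
      · exact hh'.self_of_nhds.continuousAt.continuousWithinAt
      · exact ((hsub ⟨hlt, hy.2⟩).2.1).continuousAt.continuousWithinAt
    · intro y hy
      rw [interior_Icc] at hy
      have hyy := hsub ⟨hy.1, hy.2.le⟩
      rw [hyy.2.1.deriv]
      exact hyy.1
  have hlt := hmono (left_mem_Icc.2 (le_of_lt hb)) (right_mem_Icc.2 (le_of_lt hb)) hb
  exact absurd (hsub ⟨hb, le_refl b⟩).2.2 (not_le.2 hlt)

private lemma absDerivLe {g : ℝ → ℝ} {d x0 K η : ℝ} (hd : HasDerivAt g d x0) (hη : 0 < η)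
    (hb : ∀ y, |y - x0| ≤ η → |g y - g x0| ≤ K * |y - x0|) : |d| ≤ K := by
  have hslope := hasDerivAt_iff_tendsto_slope.1 hd
  have h2 : Filter.Tendsto (fun y => |slope g x0 y|) (nhdsWithin x0 {x0}ᶜ) (nhds |d|) :=
    hslope.abs
  refine le_of_tendsto h2 ?_
  have hball : {x0}ᶜ ∩ Metric.ball x0 η ∈ nhdsWithin x0 {x0}ᶜ :=
    inter_mem_nhdsWithin _ (Metric.ball_mem_nhds _ hη)
  filter_upwards [hball] with y hy
  have hyne : y ≠ x0 := hy.1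
  have hdist : |y - x0| ≤ η := le_of_lt (by simpa [Real.dist_eq] using hy.2)
  rw [slope_def_field, abs_div, div_le_iff₀ (abs_pos.2 (sub_ne_zero.2 hyne))]
  exact hb y hdist

private lemma nonposOfForallEps {a c ε0 : ℝ} (hc : 0 < c) (hε0 : 0 < ε0)
    (h : ∀ ε, 0 < ε → ε < ε0 → a ≤ ε * c) : a ≤ 0 := by
  by_contra hcon
  push_neg at hcon
  have hmin : 0 < min (ε0/2) (a/(2*c)) := lt_min (by linarith) (by positivity)
  have hlt : min (ε0/2) (a/(2*c)) < ε0 := (min_le_left _ _).trans_lt (by linarith)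
  have hε := h _ hmin hlt
  have h2 : (min (ε0/2) (a/(2*c))) * c ≤ (a/(2*c))*c :=
    mul_le_mul_of_nonneg_right (min_le_right _ _) hc.le
  have h3 : (a/(2*c))*c = a/2 := by field_simp
  linarith

set_option maxHeartbeats 2000000 in
private lemma MP1 {T κ lam α A N : ℝ} {u ut ux uxx a f : ℝ → ℝ → ℝ}
    (hT : 0 < T) (hκ : 0 < κ) (hlam : 0 < lam) (hα : 0 < α) (hαlam : κ ≤ α * lam^2)
    (hA : 0 < A)
    (ha : ∀ x ∈ Ici (0:ℝ), ∀ t ∈ Icc (0:ℝ) T, α ≤ a x t ∧ a x t ≤ A)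
    (hcont : ContinuousOn (fun p : ℝ×ℝ => u p.1 p.2) (Ici 0 ×ˢ Icc 0 T))
    (hut : ∀ x ∈ Ioi (0:ℝ), ∀ t ∈ Ico (0:ℝ) T, HasDerivAt (fun s => u x s) (ut x t) t)
    (hux : ∀ x ∈ Ioi (0:ℝ), ∀ t ∈ Ico (0:ℝ) T, HasDerivAt (fun y => u y t) (ux x t) x)
    (huxx : ∀ x ∈ Ioi (0:ℝ), ∀ t ∈ Ico (0:ℝ) T, HasDerivAt (fun y => ux y t) (uxx x t) x)
    (pde : ∀ x ∈ Ioi (0:ℝ), ∀ t ∈ Ico (0:ℝ) T, ut x t + a x t * uxx x t + f x t = 0)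
    (hbT : ∀ x ∈ Ici (0:ℝ), u x T = 0) (hb0 : ∀ t ∈ Icc (0:ℝ) T, u 0 t = 0)
    (hbound : ∃ C, ∀ x ∈ Ici (0:ℝ), ∀ t ∈ Icc (0:ℝ) T, |u x t| ≤ C)
    (hN : 0 ≤ N) (hf : ∀ x : ℝ, ∀ t ∈ Icc (0:ℝ) T, Real.exp (-κ*(T-t)) * |f x t| ≤ N) :
    ∀ x ∈ Ici (0:ℝ), ∀ t ∈ Icc (0:ℝ) T,
      Real.exp (-κ*(T-t)) * u x t ≤ N/κ * (1 - Real.exp (-lam*x)) := by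
  intro x hx t ht
  set γ : ℝ := 2*A+1 with hγ
  have hγpos : 0 < γ := by positivity
  have key : ∀ ε : ℝ, 0 < ε →
      Real.exp (-κ*(T-t)) * u x t - N/κ * (1 - Real.exp (-lam*x))
        ≤ ε * ((1+x^2)*Real.exp (γ*(T-t))) := by
    intro ε hε
    by_contra hcon
    push_neg at hcon
    set Φ : ℝ → ℝ → ℝ := fun p s =>
      Real.exp (-κ*(T-s)) * u p s - N/κ*(1-Real.exp (-lam*p))
        - ε*((1+p^2)*Real.exp (γ*(T-s))) with hΦdef
    have hcon' : 0 < Φ x t := by simp only [hΦdef]; linarith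
    obtain ⟨Cu, hCu⟩ := hbound
    have hCu0 : 0 ≤ Cu := le_trans (abs_nonneg _) (hCu 0 Set.self_mem_Ici 0 ⟨le_refl 0, hT.le⟩)
    set R : ℝ := max x (Real.sqrt ((Cu+1)/ε)) with hRdef
    have hRx : x ≤ R := le_max_left _ _
    have hR2 : Cu + 1 ≤ ε * (1 + R^2) := by
      have h1 : Real.sqrt ((Cu+1)/ε) ≤ R := le_max_right _ _
      have h2 : (Cu+1)/ε ≤ R^2 := by
        have h3 := Real.sq_sqrt (by positivity : (0:ℝ) ≤ (Cu+1)/ε)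
        nlinarith [Real.sqrt_nonneg ((Cu+1)/ε)]
      rw [div_le_iff₀ hε] at h2
      nlinarith
    have hR0 : 0 ≤ R := le_trans hx hRx
    set Q : Set (ℝ×ℝ) := Icc 0 R ×ˢ Icc 0 T with hQdef
    have hQc : IsCompact Q := isCompact_Icc.prod isCompact_Icc
    have hQsub : Q ⊆ Ici 0 ×ˢ Icc 0 T := prod_mono (fun y hy => hy.1) (subset_refl _)
    have hc1 : Continuous fun q : ℝ×ℝ => Real.exp (-κ*(T-q.2)) :=
      Real.continuous_exp.comp (continuous_const.mul (continuous_const.sub continuous_snd))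
    have hc2 : Continuous fun q : ℝ×ℝ => N/κ*(1-Real.exp (-lam*q.1)) :=
      continuous_const.mul (continuous_const.sub (Real.continuous_exp.comp (continuous_const.mul continuous_fst)))
    have hc3 : Continuous fun q : ℝ×ℝ => ε*((1+q.1^2)*Real.exp (γ*(T-q.2))) :=
      continuous_const.mul ((continuous_const.add (continuous_fst.pow 2)).mul
        (Real.continuous_exp.comp (continuous_const.mul (continuous_const.sub continuous_snd))))
    have hΦcont : ContinuousOn (fun q : ℝ×ℝ => Φ q.1 q.2) Q := by
      simp only [hΦdef]
      exact ((hc1.continuousOn.mul (hcont.mono hQsub)).sub hc2.continuousOn).sub hc3.continuousOn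
    have hQne : Q.Nonempty := ⟨(x,t), ⟨hx, hRx⟩, ht⟩
    obtain ⟨⟨x0, t0⟩, hp0Q, hp0max⟩ := hQc.exists_isMaxOn hQne hΦcont
    have hmax : ∀ q ∈ Q, Φ q.1 q.2 ≤ Φ x0 t0 := fun q hq => hp0max hq
    have hx0 : x0 ∈ Icc 0 R := hp0Q.1
    have ht0 : t0 ∈ Icc 0 T := hp0Q.2
    have hΦpos : 0 < Φ x0 t0 := lt_of_lt_of_le hcon' (hmax (x,t) ⟨⟨hx, hRx⟩, ht⟩)
    have hexple1 : ∀ s : ℝ, s ≤ 0 → Real.exp s ≤ 1 := by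
      intro s hs
      calc Real.exp s ≤ Real.exp 0 := Real.exp_le_exp.2 hs
      _ = 1 := Real.exp_zero
    have hx0pos : 0 < x0 := by
      rcases eq_or_lt_of_le hx0.1 with h0 | h
      · exfalso
        have h00 : Φ 0 t0 = -(ε*((1+(0:ℝ)^2)*Real.exp (γ*(T-t0)))) := by
          simp only [hΦdef]
          rw [hb0 t0 ht0]
          norm_num
        rw [← h0] at hΦpos
        rw [h00] at hΦpos
        nlinarith [Real.exp_pos (γ*(T-t0))]
      · exact h
    have ht0T : t0 < T := by
      rcases lt_or_eq_of_le ht0.2 with h0 | h0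
      · exact h0
      · exfalso
        have h1 : Φ x0 T = -(N/κ*(1-Real.exp (-lam*x0))) - ε*((1+x0^2)*Real.exp (γ*(T-T))) := by
          simp only [hΦdef]
          rw [hbT x0 (le_trans hx0.1 (le_refl x0))]
          ring
        have h2 : Real.exp (-lam*x0) ≤ 1 := hexple1 _ (by nlinarith)
        have h3 : 0 ≤ N/κ := by positivity
        rw [h0] at hΦpos
        rw [h1] at hΦpos
        nlinarith [Real.exp_pos (γ*(T-T)), sq_nonneg x0,
          mul_pos hε (Real.exp_pos (γ*(T-T)))]
    have hx0R : x0 < R := by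
      rcases lt_or_eq_of_le hx0.2 with h0 | h0
      · exact h0
      · exfalso
        have he1 : Real.exp (-κ*(T-t0)) ≤ 1 := hexple1 _ (by nlinarith [ht0.2])
        have he0 : 0 < Real.exp (-κ*(T-t0)) := Real.exp_pos _
        have hu1 : Real.exp (-κ*(T-t0)) * u x0 t0 ≤ Cu := by
          have h2 : u x0 t0 ≤ |u x0 t0| := le_abs_self _
          have h3 : |u x0 t0| ≤ Cu := hCu x0 (le_trans hx0.1 (le_refl x0)) t0 ht0
          nlinarith
        have h2 : Real.exp (-lam*x0) ≤ 1 := hexple1 _ (by nlinarith [hx0.1])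
        have h3 : 0 ≤ N/κ := by positivity
        have hE1 : 1 ≤ Real.exp (γ*(T-t0)) := by
          rw [show (1:ℝ) = Real.exp 0 from Real.exp_zero.symm]
          exact Real.exp_le_exp.2 (by nlinarith [ht0.2])
        have h4 : Cu + 1 ≤ ε*((1+x0^2)*Real.exp (γ*(T-t0))) := by
          rw [← h0] at hR2
          nlinarith
        have h5 : Φ x0 t0 ≤ Cu - 0 - (Cu+1) := by
          simp only [hΦdef]
          have h6 : 0 ≤ N/κ*(1-Real.exp (-lam*x0)) := by nlinarith
          linarith
        linarith
    have hx0mem : x0 ∈ Ioi (0:ℝ) := hx0pos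
    have ht0mem : t0 ∈ Ico (0:ℝ) T := ⟨ht0.1, ht0T⟩
    set e0 : ℝ := Real.exp (-κ*(T-t0)) with he0def
    set E0 : ℝ := Real.exp (γ*(T-t0)) with hE0def
    set w0 : ℝ := Real.exp (-lam*x0) with hw0def
    have he0pos : 0 < e0 := Real.exp_pos _
    have hE0pos : 0 < E0 := Real.exp_pos _
    have hw0pos : 0 < w0 := Real.exp_pos _
    -- time derivative condition
    have hgt : HasDerivAt (fun s => Φ x0 s)
        (κ*(e0*u x0 t0) + e0*ut x0 t0 + ε*((1+x0^2)*(γ*E0))) t0 := by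
      have h1 : HasDerivAt (fun s : ℝ => -κ*(T-s)) κ t0 := by
        have := ((hasDerivAt_id t0).const_sub T).const_mul (-κ)
        exact this.congr_deriv (by ring)
      have h2 : HasDerivAt (fun s : ℝ => Real.exp (-κ*(T-s))) (e0*κ) t0 := h1.exp
      have h3 := hut x0 hx0mem t0 ht0mem
      have h4 := h2.mul h3
      have h5 : HasDerivAt (fun s : ℝ => γ*(T-s)) (-γ) t0 := by
        have := ((hasDerivAt_id t0).const_sub T).const_mul γ
        exact this.congr_deriv (by ring)
      have h6 : HasDerivAt (fun s : ℝ => ε*((1+x0^2)*Real.exp (γ*(T-s))))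
          (ε*((1+x0^2)*(E0*(-γ)))) t0 := (h5.exp.const_mul (1+x0^2)).const_mul ε
      have h7 := (h4.sub_const (N/κ*(1-w0))).sub h6
      exact h7.congr_deriv (by ring)
    have hDt_le : κ*(e0*u x0 t0) + e0*ut x0 t0 + ε*((1+x0^2)*(γ*E0)) ≤ 0 := by
      refine derivNonposOfRightMax hgt ht0T fun s hs => ?_
      exact hmax (x0, s) ⟨hx0, ⟨le_trans ht0.1 hs.1, hs.2⟩⟩
    -- space second derivative condition
    have hloc : IsLocalMax (fun p => Φ p t0) x0 := by
      filter_upwards [Ioo_mem_nhds hx0pos hx0R] with y hy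
      exact hmax (y, t0) ⟨⟨hy.1.le, hy.2.le⟩, ht0⟩
    have hh' : ∀ᶠ y in nhds x0, HasDerivAt (fun p => Φ p t0)
        (e0*ux y t0 - N/κ*(lam*Real.exp (-lam*y)) - ε*(2*y*E0)) y := by
      filter_upwards [Ioi_mem_nhds hx0pos] with y hy
      have h1 : HasDerivAt (fun p : ℝ => u p t0) (ux y t0) y := hux y hy t0 ht0mem
      have h2 : HasDerivAt (fun p : ℝ => -lam*p) (-lam) y := by
        simpa using (hasDerivAt_id y).const_mul (-lam)
      have h3 : HasDerivAt (fun p : ℝ => N/κ*(1-Real.exp (-lam*p)))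
          (N/κ * -(Real.exp (-lam*y) * -lam)) y := (h2.exp.const_sub 1).const_mul (N/κ)
      have h4 : HasDerivAt (fun p : ℝ => 1+p^2) (2*y) y := by
        simpa using (hasDerivAt_pow 2 y).const_add 1
      have h5 : HasDerivAt (fun p : ℝ => ε*((1+p^2)*E0)) (ε*(2*y*E0)) y :=
        (h4.mul_const E0).const_mul ε
      have h6 := ((h1.const_mul e0).sub h3).sub h5
      exact h6.congr_deriv (by ring)
    have hd2 : HasDerivAt (fun y => e0*ux y t0 - N/κ*(lam*Real.exp (-lam*y)) - ε*(2*y*E0))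
        (e0*uxx x0 t0 + N/κ*(lam^2*w0) - ε*(2*E0)) x0 := by
      have h1 := (huxx x0 hx0mem t0 ht0mem).const_mul e0
      have h2 : HasDerivAt (fun p : ℝ => -lam*p) (-lam) x0 := by
        simpa using (hasDerivAt_id x0).const_mul (-lam)
      have h3 : HasDerivAt (fun p : ℝ => N/κ*(lam*Real.exp (-lam*p)))
          (N/κ*(lam*(w0*(-lam)))) x0 := (h2.exp.const_mul lam).const_mul (N/κ)
      have h4 : HasDerivAt (fun p : ℝ => ε*(2*p*E0)) (ε*(2*E0)) x0 := by
        have h5 : HasDerivAt (fun p : ℝ => 2*p*E0) (2*E0) x0 := by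
          have := ((hasDerivAt_id x0).const_mul 2).mul_const E0
          exact this.congr_deriv (by ring)
        exact h5.const_mul ε
      have h6 := (h1.sub h3).sub h4
      exact h6.congr_deriv (by ring)
    have hDxx_le : e0*uxx x0 t0 + N/κ*(lam^2*w0) - ε*(2*E0) ≤ 0 :=
      secondDerivNonposOfLocalMax hloc hh' hd2
    -- algebra
    have hax := ha x0 hx0pos.le t0 ht0
    have hpde := pde x0 hx0mem t0 ht0mem
    have hfb := hf x0 t0 ht0
    have hf2 : e0 * f x0 t0 ≤ N := by
      have := le_abs_self (f x0 t0)
      nlinarith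
    have h5 : e0 * ut x0 t0 = -(a x0 t0 * (e0 * uxx x0 t0)) - e0 * f x0 t0 := by
      linear_combination e0 * hpde
    have q1 : 0 ≤ N/κ*(lam^2*w0) := by positivity
    have q2 : e0*uxx x0 t0 ≤ ε*(2*E0) - N/κ*(lam^2*w0) := by linarith
    have q3 : a x0 t0 * (e0*uxx x0 t0) ≤ a x0 t0 * (ε*(2*E0)) - a x0 t0 * (N/κ*(lam^2*w0)) := by
      have h7 := mul_le_mul_of_nonneg_left q2 (le_trans hα.le hax.1)
      nlinarith
    have q4 : a x0 t0 * (ε*(2*E0)) ≤ A * (ε*(2*E0)) :=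
      mul_le_mul_of_nonneg_right hax.2 (by positivity)
    have q5 : α * (N/κ*(lam^2*w0)) ≤ a x0 t0 * (N/κ*(lam^2*w0)) :=
      mul_le_mul_of_nonneg_right hax.1 q1
    have h6 : a x0 t0 * (e0*uxx x0 t0) ≤ A*(ε*(2*E0)) - α*(N/κ*(lam^2*w0)) := by linarith
    have h7 : N*w0 ≤ α*(N/κ*(lam^2*w0)) := by
      have h8 : α*(N/κ*(lam^2*w0)) = (N/κ)*(α*lam^2)*w0 := by ring
      have h9 : N*w0 = (N/κ)*κ*w0 := by field_simp
      rw [h8, h9]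
      have h10 : 0 ≤ N/κ := by positivity
      have h11 : N/κ*κ ≤ N/κ*(α*lam^2) := mul_le_mul_of_nonneg_left hαlam h10
      exact mul_le_mul_of_nonneg_right h11 hw0pos.le
    have h8 : e0 * u x0 t0 = Φ x0 t0 + N/κ*(1-w0) + ε*((1+x0^2)*E0) := by
      simp only [hΦdef]
      ring
    have h9 : κ*(N/κ*(1-w0)) = N*(1-w0) := by field_simp
    have h10 : κ*(e0*u x0 t0) = κ*(Φ x0 t0) + N*(1-w0) + κ*(ε*((1+x0^2)*E0)) := by
      rw [h8]
      rw [mul_add, mul_add, h9]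
    have h11 : 0 ≤ κ*(ε*((1+x0^2)*E0)) := by positivity
    have h12 : ε*(γ*E0) ≤ ε*((1+x0^2)*(γ*E0)) := by
      nlinarith [mul_nonneg (mul_nonneg (mul_nonneg hε.le hγpos.le) hE0pos.le) (sq_nonneg x0)]
    have h13 : ε*(γ*E0) = A*(ε*(2*E0)) + ε*E0 := by rw [hγ]; ring
    have h14 : 0 < κ*(Φ x0 t0) := mul_pos hκ hΦpos
    have h15 : 0 < ε*E0 := mul_pos hε hE0pos
    rw [h5] at hDt_le
    linarith
  -- conclude
  by_contra hcon
  push_neg at hcon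
  have hc : 0 < (1+x^2)*Real.exp (γ*(T-t)) := by positivity
  have hapos : 0 < Real.exp (-κ*(T-t)) * u x t - N/κ * (1 - Real.exp (-lam*x)) := sub_pos.2 hcon
  have hkey := key ((Real.exp (-κ*(T-t)) * u x t - N/κ * (1 - Real.exp (-lam*x)))/(2*((1+x^2)*Real.exp (γ*(T-t))))) (by positivity)
  have h2 : (Real.exp (-κ*(T-t)) * u x t - N/κ * (1 - Real.exp (-lam*x)))/(2*((1+x^2)*Real.exp (γ*(T-t)))) * ((1+x^2)*Real.exp (γ*(T-t))) = (Real.exp (-κ*(T-t)) * u x t - N/κ * (1 - Real.exp (-lam*x)))/2 := by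
    field_simp
  rw [h2] at hkey
  linarith

set_option maxHeartbeats 4000000 in
private lemma MP2 {T κ lam α N δ : ℝ} {u ut ux uxx a f : ℝ → ℝ → ℝ}
    (hT : 0 < T) (hκ : 0 < κ) (hlam : 0 < lam) (hα : 0 < α) (hδ : 0 < δ) (hN : 0 < N)
    (ha : ∀ x ∈ Ici (0:ℝ), ∀ t ∈ Icc (0:ℝ) T, α ≤ a x t)
    (hcont : ContinuousOn (fun p : ℝ×ℝ => u p.1 p.2) (Ici 0 ×ˢ Icc 0 T))
    (hut : ∀ x ∈ Ioi (0:ℝ), ∀ t ∈ Ico (0:ℝ) T, HasDerivAt (fun s => u x s) (ut x t) t)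
    (hux : ∀ x ∈ Ioi (0:ℝ), ∀ t ∈ Ico (0:ℝ) T, HasDerivAt (fun y => u y t) (ux x t) x)
    (huxx : ∀ x ∈ Ioi (0:ℝ), ∀ t ∈ Ico (0:ℝ) T, HasDerivAt (fun y => ux y t) (uxx x t) x)
    (pde : ∀ x ∈ Ioi (0:ℝ), ∀ t ∈ Ico (0:ℝ) T, ut x t + a x t * uxx x t + f x t = 0)
    (hbT : ∀ x ∈ Ici (0:ℝ), u x T = 0) (hb0 : ∀ t ∈ Icc (0:ℝ) T, u 0 t = 0)
    (hbar : ∀ x ∈ Ici (0:ℝ), ∀ t ∈ Icc (0:ℝ) T,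
      |Real.exp (-κ*(T-t)) * u x t| ≤ N/κ * (1 - Real.exp (-lam*x)))
    (hf : ∀ x : ℝ, ∀ t ∈ Icc (0:ℝ) T, Real.exp (-κ*(T-t)) * |f x t| ≤ N) :
    ∀ t ∈ Icc (0:ℝ) T, ∀ y ∈ Ici (0:ℝ), ∀ x ∈ Icc y (y+δ),
      Real.exp (-κ*(T-t)) * (u x t - u y t) ≤
        (2*N*δ/α + 4*N/(κ*δ) + 2*N*lam/κ) * ((x-y) - (x-y)^2/(2*δ)) := by
  intro t ht yy hyy xx hxx
  set K : ℝ := 2*N*δ/α + 4*N/(κ*δ) + 2*N*lam/κ with hKdef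
  have hKpos : 0 < K := by positivity
  have hK1 : 2*N*δ/α ≤ K := by
    have e1 : 0 ≤ 4*N/(κ*δ) := by positivity
    have e2 : 0 ≤ 2*N*lam/κ := by positivity
    linarith [hKdef.ge]
  have hK2 : 4*N/(κ*δ) ≤ K := by
    have e1 : 0 ≤ 2*N*δ/α := by positivity
    have e2 : 0 ≤ 2*N*lam/κ := by positivity
    linarith [hKdef.ge]
  have hK3 : 2*N*lam/κ ≤ K := by
    have e1 : 0 ≤ 2*N*δ/α := by positivity
    have e2 : 0 ≤ 4*N/(κ*δ) := by positivity
    linarith [hKdef.ge]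
  have hNκ : 0 < N/κ := by positivity
  -- φ facts
  have hφhalf : ∀ r : ℝ, 0 ≤ r → r ≤ δ → r/2 ≤ r - r^2/(2*δ) := by
    intro r h1 h2
    have h3 : r^2/(2*δ) ≤ r/2 := by
      rw [div_le_div_iff₀ (by positivity) (by positivity)]
      nlinarith
    linarith
  have hφnn : ∀ r : ℝ, 0 ≤ r → r ≤ δ → 0 ≤ r - r^2/(2*δ) := by
    intro r h1 h2
    have := hφhalf r h1 h2
    linarith
  -- weighted sup bound from the barrier
  have hbarNκ : ∀ z ∈ Ici (0:ℝ), ∀ s ∈ Icc (0:ℝ) T,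
      |Real.exp (-κ*(T-s)) * u z s| ≤ N/κ := by
    intro z hz s hs
    have h1 := hbar z hz s hs
    have h2 : 0 < Real.exp (-lam*z) := Real.exp_pos _
    have h3 : N/κ * (1 - Real.exp (-lam*z)) ≤ N/κ := by nlinarith
    linarith
  -- 1 - exp(-lam z) ≤ lam z
  have hexpapprox : ∀ z : ℝ, 1 - Real.exp (-lam*z) ≤ lam*z := by
    intro z
    have := Real.add_one_le_exp (-(lam*z))
    have h2 : -lam*z = -(lam*z) := by ring
    rw [h2]
    linarith
  -- conclude from ε-approximation
  have hc : (0:ℝ) < 1 + xx^2 := by positivity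
  have hε0 : 0 < min (N/α) (K/(2*δ)) := lt_min (by positivity) (by positivity)
  refine sub_nonpos.1 (nonposOfForallEps hc hε0 ?_)
  intro ε hε hεlt
  have hεN : ε*α < N := by
    have := (lt_min_iff.1 hεlt).1
    rw [lt_div_iff₀ hα] at this
    linarith
  have hεK : 2*ε*δ < K := by
    have := (lt_min_iff.1 hεlt).2
    rw [lt_div_iff₀ (by positivity : (0:ℝ) < 2*δ)] at this
    linarith
  by_contra hcon
  push_neg at hcon
  -- the doubled function
  set G : ℝ → ℝ → ℝ → ℝ := fun p q s =>
    Real.exp (-κ*(T-s)) * (u p s - u q s) - K*((p-q) - (p-q)^2/(2*δ)) - ε*(1+p^2)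
    with hGdef
  have hGeq : ∀ p q s : ℝ, G p q s = Real.exp (-κ*(T-s)) * (u p s - u q s)
      - K*((p-q) - (p-q)^2/(2*δ)) - ε*(1+p^2) := fun _ _ _ => rfl
  have hcon' : 0 < G xx yy t := by rw [hGeq]; linarith
  set R : ℝ := max xx (Real.sqrt (2*N/(κ*ε))) with hRdef
  have hRx : xx ≤ R := le_max_left _ _
  have hR2 : 2*N/κ < ε * (1 + R^2) := by
    have h1 : Real.sqrt (2*N/(κ*ε)) ≤ R := le_max_right _ _
    have h2 : 2*N/(κ*ε) ≤ R^2 := by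
      have h3 := Real.sq_sqrt (by positivity : (0:ℝ) ≤ 2*N/(κ*ε))
      nlinarith [Real.sqrt_nonneg (2*N/(κ*ε))]
    rw [div_le_iff₀ (by positivity : (0:ℝ) < κ*ε)] at h2
    have h4 : 2*N/κ ≤ ε*R^2 := by
      rw [div_le_iff₀ hκ]
      nlinarith
    nlinarith
  have hR0 : 0 ≤ R := le_trans (le_trans hyy hxx.1) hRx
  -- the compact domain
  set S : Set (ℝ×ℝ×ℝ) :=
    {p : ℝ×ℝ×ℝ | p.2.1 ≤ p.1 ∧ p.1 ≤ p.2.1 + δ} ∩ (Icc 0 R ×ˢ Icc 0 R ×ˢ Icc 0 T)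
    with hSdef
  have hc1 : Continuous fun p : ℝ×ℝ×ℝ => p.1 := continuous_fst
  have hc21 : Continuous fun p : ℝ×ℝ×ℝ => p.2.1 := continuous_fst.comp continuous_snd
  have hc22 : Continuous fun p : ℝ×ℝ×ℝ => p.2.2 := continuous_snd.comp continuous_snd
  have hSclosed : IsClosed {p : ℝ×ℝ×ℝ | p.2.1 ≤ p.1 ∧ p.1 ≤ p.2.1 + δ} :=
    (isClosed_le hc21 hc1).inter (isClosed_le hc1 (hc21.add continuous_const))
  have hSc : IsCompact S :=
    (isCompact_Icc.prod (isCompact_Icc.prod isCompact_Icc)).inter_left hSclosed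
  have hSmem : ∀ p ∈ S, (p.1 ∈ Icc 0 R ∧ p.2.1 ∈ Icc 0 R ∧ p.2.2 ∈ Icc 0 T)
      ∧ p.2.1 ≤ p.1 ∧ p.1 ≤ p.2.1 + δ := by
    intro p hp
    exact ⟨⟨hp.2.1, hp.2.2.1, hp.2.2.2⟩, hp.1.1, hp.1.2⟩
  -- continuity of G on S
  have hmaps1 : MapsTo (fun p : ℝ×ℝ×ℝ => (p.1, p.2.2)) S (Ici 0 ×ˢ Icc 0 T) := by
    intro p hp
    exact ⟨(hSmem p hp).1.1.1, (hSmem p hp).1.2.2⟩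
  have hmaps2 : MapsTo (fun p : ℝ×ℝ×ℝ => (p.2.1, p.2.2)) S (Ici 0 ×ˢ Icc 0 T) := by
    intro p hp
    exact ⟨(hSmem p hp).1.2.1.1, (hSmem p hp).1.2.2⟩
  have hu1 : ContinuousOn (fun p : ℝ×ℝ×ℝ => u p.1 p.2.2) S :=
    hcont.comp (Continuous.continuousOn (hc1.prodMk hc22)) hmaps1
  have hu2 : ContinuousOn (fun p : ℝ×ℝ×ℝ => u p.2.1 p.2.2) S :=
    hcont.comp (Continuous.continuousOn (hc21.prodMk hc22)) hmaps2
  have hGcont : ContinuousOn (fun p : ℝ×ℝ×ℝ => G p.1 p.2.1 p.2.2) S := by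
    simp only [hGdef]
    apply ContinuousOn.sub
    apply ContinuousOn.sub
    · exact ((Real.continuous_exp.comp
        (continuous_const.mul (continuous_const.sub hc22))).continuousOn).mul (hu1.sub hu2)
    · exact (continuous_const.mul (((hc1.sub hc21).sub
        (((hc1.sub hc21).pow 2).div_const (2*δ))))).continuousOn
    · exact (continuous_const.mul (continuous_const.add (hc1.pow 2))).continuousOn
  have hSne : ((xx, yy, t) : ℝ×ℝ×ℝ) ∈ S := by
    constructor
    · exact ⟨hxx.1, hxx.2⟩
    · exact ⟨⟨le_trans hyy hxx.1, hRx⟩, ⟨hyy, le_trans hxx.1 hRx⟩, ht⟩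
  obtain ⟨⟨x0, y0, t0⟩, hp0S, hp0max⟩ := hSc.exists_isMaxOn ⟨_, hSne⟩ hGcont
  have hmax : ∀ p ∈ S, G p.1 p.2.1 p.2.2 ≤ G x0 y0 t0 := fun p hp => hp0max hp
  have hGpos : 0 < G x0 y0 t0 := lt_of_lt_of_le hcon' (hmax (xx,yy,t) hSne)
  obtain ⟨⟨hx0Ra, hy0Ra, ht0a⟩, hyx0a, hxy0δa⟩ := hSmem _ hp0S
  have hx0R' : x0 ∈ Icc 0 R := hx0Ra
  have hy0R' : y0 ∈ Icc 0 R := hy0Ra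
  have ht0' : t0 ∈ Icc 0 T := ht0a
  have hyx0 : y0 ≤ x0 := hyx0a
  have hxy0δ : x0 ≤ y0 + δ := hxy0δa
  have hSmem2 : ∀ p : ℝ×ℝ×ℝ, p.2.1 ≤ p.1 → p.1 ≤ p.2.1 + δ → p.1 ∈ Icc 0 R →
      p.2.1 ∈ Icc 0 R → p.2.2 ∈ Icc 0 T → p ∈ S := fun p h1 h2 h3 h4 h5 => ⟨⟨h1,h2⟩,h3,h4,h5⟩
  clear_value G K R S
  have hy00 : 0 ≤ y0 := hy0R'.1
  have hx00 : 0 ≤ x0 := hx0R'.1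
  have hr0 : 0 ≤ x0 - y0 := by linarith
  have hr0δ : x0 - y0 ≤ δ := by linarith
  have ht0Icc : t0 ∈ Icc (0:ℝ) T := ht0'
  have hφr0 : 0 ≤ (x0-y0) - (x0-y0)^2/(2*δ) := hφnn _ hr0 hr0δ
  have he0pos : 0 < Real.exp (-κ*(T-t0)) := Real.exp_pos _
  have hbx0 := hbarNκ x0 hx00 t0 ht0Icc
  have hby0 := hbarNκ y0 hy00 t0 ht0Icc
  have hdiffN : Real.exp (-κ*(T-t0)) * (u x0 t0 - u y0 t0) ≤ 2*(N/κ) := by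
    have h1 := abs_le.1 hbx0
    have h2 := abs_le.1 hby0
    have h3 : Real.exp (-κ*(T-t0)) * (u x0 t0 - u y0 t0)
        = Real.exp (-κ*(T-t0)) * u x0 t0 - Real.exp (-κ*(T-t0)) * u y0 t0 := by ring
    rw [h3]; linarith [h1.2, h2.1]
  -- exclude t0 = T
  have ht0T : t0 < T := by
    rcases lt_or_eq_of_le ht0'.2 with h0 | h0
    · exact h0
    · exfalso
      have h1 : G x0 y0 t0 = -(K*((x0-y0) - (x0-y0)^2/(2*δ))) - ε*(1+x0^2) := by
        rw [hGeq, h0, hbT x0 hx00, hbT y0 hy00]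
        ring
      rw [h1] at hGpos
      nlinarith [mul_nonneg hKpos.le hφr0, sq_nonneg x0]
  -- exclude y0 = 0
  have hy0pos : 0 < y0 := by
    rcases eq_or_lt_of_le hy00 with h0 | h0
    · exfalso
      have hu0 : u y0 t0 = 0 := by rw [← h0]; exact hb0 t0 ht0Icc
      have h1 : G x0 y0 t0 = Real.exp (-κ*(T-t0)) * u x0 t0
          - K*((x0-y0) - (x0-y0)^2/(2*δ)) - ε*(1+x0^2) := by
        rw [hGeq, hu0]
        ring
      have h2 : Real.exp (-κ*(T-t0)) * u x0 t0 ≤ N/κ * (lam*x0) := by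
        have h3 := (abs_le.1 (hbar x0 hx00 t0 ht0Icc)).2
        have h4 := le_abs_self (Real.exp (-κ*(T-t0)) * u x0 t0)
        have h5 := hexpapprox x0
        nlinarith [hbar x0 hx00 t0 ht0Icc]
      have h6 : x0 ≤ δ := by rw [← h0] at hxy0δ; linarith
      have h7 : x0/2 ≤ (x0-y0) - (x0-y0)^2/(2*δ) := by
        rw [← h0]
        have := hφhalf x0 hx00 h6
        simpa using this
      have h8 : N/κ*(lam*x0) ≤ K*(x0/2) := by
        have h9 : 2*N*lam/κ ≤ K := hK3
        have h10 : N/κ*(lam*x0) = (2*N*lam/κ)*(x0/2) := by ring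
        rw [h10]
        exact mul_le_mul_of_nonneg_right h9 (by linarith)
      have h11 : K*(x0/2) ≤ K*((x0-y0) - (x0-y0)^2/(2*δ)) :=
        mul_le_mul_of_nonneg_left h7 hKpos.le
      rw [h1] at hGpos
      nlinarith [sq_nonneg x0]
    · exact h0
  -- exclude x0 = y0
  have hx0y0 : y0 < x0 := by
    rcases eq_or_lt_of_le hyx0 with h0 | h0
    · exfalso
      have h1 : G x0 y0 t0 = -(ε*(1+x0^2)) := by
        rw [hGeq, ← h0]
        ring
      rw [h1] at hGpos
      nlinarith [sq_nonneg x0]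
    · exact h0
  -- exclude x0 = y0 + δ
  have hx0δ : x0 < y0 + δ := by
    rcases lt_or_eq_of_le hxy0δ with h0 | h0
    · exact h0
    · exfalso
      have hr : x0 - y0 = δ := by linarith
      have h1 : K*((x0-y0) - (x0-y0)^2/(2*δ)) = K*(δ/2) := by
        rw [hr]
        congr 1
        field_simp
        ring
      have h2 : 2*(N/κ) ≤ K*(δ/2) := by
        have h3 : (4*N/(κ*δ))*(δ/2) = 2*(N/κ) := by field_simp; ring
        rw [← h3]
        exact mul_le_mul_of_nonneg_right hK2 (by linarith)
      have h4 : G x0 y0 t0 ≤ 2*(N/κ) - K*(δ/2) - ε*(1+x0^2) := by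
        rw [hGeq, ← h1]
        linarith [hdiffN]
      nlinarith [mul_pos hε (show (0:ℝ) < 1+x0^2 by positivity)]
  -- exclude x0 = R
  have hx0R : x0 < R := by
    rcases lt_or_eq_of_le hx0R'.2 with h0 | h0
    · exact h0
    · exfalso
      have h1 : G x0 y0 t0 ≤ 2*(N/κ) - ε*(1+x0^2) := by
        rw [hGeq]
        have h2 : 0 ≤ K*((x0-y0) - (x0-y0)^2/(2*δ)) := mul_nonneg hKpos.le hφr0
        linarith [hdiffN]
      rw [← h0] at hR2
      have h4 : 2*(N/κ) = 2*N/κ := by ring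
      linarith only [hR2, hGpos, h1, h4]
  have hx0pos : 0 < x0 := lt_trans hy0pos hx0y0
  have hx0mem : x0 ∈ Ioi (0:ℝ) := hx0pos
  have hy0mem : y0 ∈ Ioi (0:ℝ) := hy0pos
  have ht0mem : t0 ∈ Ico (0:ℝ) T := ⟨ht0'.1, ht0T⟩
  -- time derivative condition
  have hgt : HasDerivAt (fun s => G x0 y0 s)
      (κ*(Real.exp (-κ*(T-t0))*(u x0 t0 - u y0 t0))
        + Real.exp (-κ*(T-t0))*(ut x0 t0 - ut y0 t0)) t0 := by
    have h1 : HasDerivAt (fun s : ℝ => -κ*(T-s)) κ t0 := by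
      have := ((hasDerivAt_id t0).const_sub T).const_mul (-κ)
      exact this.congr_deriv (by ring)
    have h2 : HasDerivAt (fun s : ℝ => Real.exp (-κ*(T-s))) (Real.exp (-κ*(T-t0))*κ) t0 := h1.exp
    have h3 := (hut x0 hx0mem t0 ht0mem).sub (hut y0 hy0mem t0 ht0mem)
    have h4 := h2.mul h3
    have h5 := (h4.sub_const (K*((x0-y0) - (x0-y0)^2/(2*δ)))).sub_const (ε*(1+x0^2))
    have h6 : (fun s => G x0 y0 s) = fun s => Real.exp (-κ*(T-s)) * (u x0 s - u y0 s)
        - K*((x0-y0) - (x0-y0)^2/(2*δ)) - ε*(1+x0^2) := by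
      funext s
      rw [hGeq]
    rw [h6]
    exact h5.congr_deriv (by simp only [Pi.sub_apply]; ring)
  have hDt_le : κ*(Real.exp (-κ*(T-t0))*(u x0 t0 - u y0 t0))
      + Real.exp (-κ*(T-t0))*(ut x0 t0 - ut y0 t0) ≤ 0 := by
    refine derivNonposOfRightMax hgt ht0T fun s hs => ?_
    exact hmax (x0, y0, s) (hSmem2 _ hyx0 hxy0δ hx0R' hy0R' ⟨le_trans ht0'.1 hs.1, hs.2⟩)
  -- x-direction second order condition
  have hlocx : IsLocalMax (fun p => G p y0 t0) x0 := by
    have hmem : Ioo y0 (min R (y0+δ)) ∈ nhds x0 := Ioo_mem_nhds hx0y0 (lt_min hx0R hx0δ)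
    filter_upwards [hmem] with p hp
    have hp2 : p < y0 + δ := lt_of_lt_of_le hp.2 (min_le_right _ _)
    have hpR : p < R := lt_of_lt_of_le hp.2 (min_le_left _ _)
    exact hmax (p, y0, t0)
      (hSmem2 _ hp.1.le hp2.le ⟨le_trans hy00 hp.1.le, hpR.le⟩ hy0R' ht0')
  have hhx : ∀ᶠ p in nhds x0, HasDerivAt (fun z => G z y0 t0)
      (Real.exp (-κ*(T-t0))*ux p t0 - K*(1 - 2*(p-y0)/(2*δ)) - ε*(2*p)) p := by
    filter_upwards [Ioi_mem_nhds hx0pos] with p hp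
    have h1 : HasDerivAt (fun z : ℝ => u z t0 - u y0 t0) (ux p t0) p :=
      (hux p hp t0 ht0mem).sub_const (u y0 t0)
    have h2 := h1.const_mul (Real.exp (-κ*(T-t0)))
    have h3 : HasDerivAt (fun z : ℝ => z - y0) 1 p := (hasDerivAt_id p).sub_const y0
    have h4 : HasDerivAt (fun z : ℝ => (z-y0)^2) (2*(p-y0)) p := by
      have := h3.pow 2
      exact this.congr_deriv (by ring)
    have h5 : HasDerivAt (fun z : ℝ => (z-y0) - (z-y0)^2/(2*δ)) (1 - 2*(p-y0)/(2*δ)) p :=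
      h3.sub (h4.div_const (2*δ))
    have h6 := h5.const_mul K
    have h7 : HasDerivAt (fun z : ℝ => ε*(1+z^2)) (ε*(2*p)) p := by
      have := ((hasDerivAt_pow 2 p).const_add 1).const_mul ε
      exact this.congr_deriv (by ring)
    have h8 := (h2.sub h6).sub h7
    have h9 : (fun z => G z y0 t0) = fun z => Real.exp (-κ*(T-t0))*(u z t0 - u y0 t0)
        - K*((z-y0) - (z-y0)^2/(2*δ)) - ε*(1+z^2) := by
      funext z
      rw [hGeq]
    rw [h9]
    exact h8
  have hd2x : HasDerivAt
      (fun p => Real.exp (-κ*(T-t0))*ux p t0 - K*(1 - 2*(p-y0)/(2*δ)) - ε*(2*p))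
      (Real.exp (-κ*(T-t0))*uxx x0 t0 + K*(2/(2*δ)) - ε*2) x0 := by
    have h1 := (huxx x0 hx0mem t0 ht0mem).const_mul (Real.exp (-κ*(T-t0)))
    have h3 : HasDerivAt (fun p : ℝ => p - y0) 1 x0 := (hasDerivAt_id x0).sub_const y0
    have h4 : HasDerivAt (fun p : ℝ => K*(1 - 2*(p-y0)/(2*δ))) (-(K*(2/(2*δ)))) x0 := by
      have h5 : HasDerivAt (fun p : ℝ => 2*(p-y0)) (2*1) x0 := h3.const_mul 2
      have h6 := ((h5.div_const (2*δ)).const_sub 1).const_mul K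
      exact h6.congr_deriv (by ring)
    have h7 : HasDerivAt (fun p : ℝ => ε*(2*p)) (ε*2) x0 := by
      have h8 : HasDerivAt (fun p : ℝ => 2*p) 2 x0 := by
        simpa using (hasDerivAt_id x0).const_mul (2:ℝ)
      exact h8.const_mul ε
    have h9 := (h1.sub h4).sub h7
    exact h9.congr_deriv (by ring)
  have hD2x : Real.exp (-κ*(T-t0))*uxx x0 t0 + K*(2/(2*δ)) - ε*2 ≤ 0 :=
    secondDerivNonposOfLocalMax hlocx hhx hd2x
  -- y-direction second order condition
  have hlocy : IsLocalMax (fun q => G x0 q t0) y0 := by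
    have hmem : Ioo (max 0 (x0-δ)) x0 ∈ nhds y0 :=
      Ioo_mem_nhds (max_lt hy0pos (by linarith)) hx0y0
    filter_upwards [hmem] with q hq
    have hq0 : 0 ≤ q := le_of_lt (lt_of_le_of_lt (le_max_left 0 (x0-δ)) hq.1)
    have hqδ : x0 ≤ q + δ := by
      have := lt_of_le_of_lt (le_max_right 0 (x0-δ)) hq.1
      linarith
    have hqR : q ≤ R := le_trans hq.2.le hx0R'.2
    exact hmax (x0, q, t0) (hSmem2 _ hq.2.le hqδ hx0R' ⟨hq0, hqR⟩ ht0')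
  have hhy : ∀ᶠ q in nhds y0, HasDerivAt (fun z => G x0 z t0)
      (-(Real.exp (-κ*(T-t0))*ux q t0) - K*(2*(x0-q)/(2*δ) - 1)) q := by
    filter_upwards [Ioi_mem_nhds hy0pos] with q hq
    have h1 : HasDerivAt (fun z : ℝ => u x0 t0 - u z t0) (-(ux q t0)) q :=
      (hux q hq t0 ht0mem).const_sub (u x0 t0)
    have h2 := h1.const_mul (Real.exp (-κ*(T-t0)))
    have h3 : HasDerivAt (fun z : ℝ => x0 - z) (-1) q := (hasDerivAt_id q).const_sub x0
    have h4 : HasDerivAt (fun z : ℝ => (x0-z)^2) (-(2*(x0-q))) q := by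
      have := h3.pow 2
      exact this.congr_deriv (by ring)
    have h5 : HasDerivAt (fun z : ℝ => (x0-z) - (x0-z)^2/(2*δ)) (-1 - -(2*(x0-q))/(2*δ)) q :=
      h3.sub (h4.div_const (2*δ))
    have h6 := h5.const_mul K
    have h8 := (h2.sub h6).sub_const (ε*(1+x0^2))
    have h9 : (fun z => G x0 z t0) = fun z => Real.exp (-κ*(T-t0))*(u x0 t0 - u z t0)
        - K*((x0-z) - (x0-z)^2/(2*δ)) - ε*(1+x0^2) := by
      funext z
      rw [hGeq]
    rw [h9]
    exact h8.congr_deriv (by ring)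
  have hd2y : HasDerivAt
      (fun q => -(Real.exp (-κ*(T-t0))*ux q t0) - K*(2*(x0-q)/(2*δ) - 1))
      (-(Real.exp (-κ*(T-t0))*uxx y0 t0) + K*(2/(2*δ))) y0 := by
    have h1 := ((huxx y0 hy0mem t0 ht0mem).const_mul (Real.exp (-κ*(T-t0)))).neg
    have h3 : HasDerivAt (fun q : ℝ => x0 - q) (-1) y0 := (hasDerivAt_id y0).const_sub x0
    have h4 : HasDerivAt (fun q : ℝ => K*(2*(x0-q)/(2*δ) - 1)) (-(K*(2/(2*δ)))) y0 := by
      have h5 : HasDerivAt (fun q : ℝ => 2*(x0-q)) (2*(-1)) y0 := h3.const_mul 2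
      have h6 := ((h5.div_const (2*δ)).sub_const 1).const_mul K
      exact h6.congr_deriv (by ring)
    have h9 := h1.sub h4
    exact h9.congr_deriv (by ring)
  have hD2y : -(Real.exp (-κ*(T-t0))*uxx y0 t0) + K*(2/(2*δ)) ≤ 0 :=
    secondDerivNonposOfLocalMax hlocy hhy hd2y
  -- final algebra
  have hKδ : K*(2/(2*δ)) = K/δ := by
    field_simp
  have hpde1 := pde x0 hx0mem t0 ht0mem
  have hpde2 := pde y0 hy0mem t0 ht0mem
  have hfx1 : Real.exp (-κ*(T-t0)) * f x0 t0 ≤ N := by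
    have h1 := mul_le_mul_of_nonneg_left (le_abs_self (f x0 t0)) he0pos.le
    have h2 := hf x0 t0 ht0Icc
    linarith only [h1, h2]
  have hfy1 : -N ≤ Real.exp (-κ*(T-t0)) * f y0 t0 := by
    have h1 := mul_le_mul_of_nonneg_left (neg_abs_le (f y0 t0)) he0pos.le
    have h2 := hf y0 t0 ht0Icc
    have h3 : Real.exp (-κ*(T-t0)) * -|f y0 t0| = -(Real.exp (-κ*(T-t0)) * |f y0 t0|) := by
      ring
    linarith only [h1, h2, h3]
  have ha1 := ha x0 hx00 t0 ht0Icc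
  have ha2 := ha y0 hy00 t0 ht0Icc
  have hsub : Real.exp (-κ*(T-t0)) * (ut x0 t0 - ut y0 t0)
      = -(a x0 t0 * (Real.exp (-κ*(T-t0)) * uxx x0 t0))
        + a y0 t0 * (Real.exp (-κ*(T-t0)) * uxx y0 t0)
        - Real.exp (-κ*(T-t0)) * f x0 t0 + Real.exp (-κ*(T-t0)) * f y0 t0 := by
    linear_combination Real.exp (-κ*(T-t0)) * hpde1 - Real.exp (-κ*(T-t0)) * hpde2
  have hX1 : Real.exp (-κ*(T-t0)) * uxx x0 t0 ≤ -(K/δ) + 2*ε := by linarith [hD2x, hKδ]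
  have hX2 : K/δ ≤ Real.exp (-κ*(T-t0)) * uxx y0 t0 := by linarith [hD2y, hKδ]
  have hεKδ : 2*ε < K/δ := by
    rw [lt_div_iff₀ hδ]
    linarith
  have hX1neg : Real.exp (-κ*(T-t0)) * uxx x0 t0 ≤ 0 := by linarith
  have ht1 : a x0 t0 * (Real.exp (-κ*(T-t0)) * uxx x0 t0)
      ≤ α * (Real.exp (-κ*(T-t0)) * uxx x0 t0) := by
    have hprod := mul_nonneg (sub_nonneg.2 ha1) (neg_nonneg.2 hX1neg)
    nlinarith only [hprod]
  have hX2pos : 0 < Real.exp (-κ*(T-t0)) * uxx y0 t0 :=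
    lt_of_lt_of_le (by positivity) hX2
  have ht2 : α * (K/δ) ≤ a y0 t0 * (Real.exp (-κ*(T-t0)) * uxx y0 t0) := by
    have h1 : α * (K/δ) ≤ α * (Real.exp (-κ*(T-t0)) * uxx y0 t0) :=
      mul_le_mul_of_nonneg_left hX2 hα.le
    have h2 : α * (Real.exp (-κ*(T-t0)) * uxx y0 t0)
        ≤ a y0 t0 * (Real.exp (-κ*(T-t0)) * uxx y0 t0) :=
      mul_le_mul_of_nonneg_right ha2 hX2pos.le
    linarith
  have hKδ2N : 2*N ≤ α*(K/δ) := by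
    rw [div_le_iff₀ hα] at hK1
    have h1 : α*(K/δ) = α*K/δ := by ring
    rw [h1, le_div_iff₀ hδ]
    linarith
  have hdiffpos : 0 ≤ Real.exp (-κ*(T-t0)) * (u x0 t0 - u y0 t0) := by
    have h1 := hGpos
    rw [hGeq] at h1
    have h2 : 0 ≤ K*((x0-y0) - (x0-y0)^2/(2*δ)) := mul_nonneg hKpos.le hφr0
    have h3 : 0 ≤ ε*(1+x0^2) := by positivity
    linarith only [h1, h2, h3]
  have hfinal1 : α * (Real.exp (-κ*(T-t0)) * uxx x0 t0) ≤ α*(-(K/δ) + 2*ε) :=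
    mul_le_mul_of_nonneg_left hX1 hα.le
  have hfinal2 : 0 ≤ κ * (Real.exp (-κ*(T-t0)) * (u x0 t0 - u y0 t0)) :=
    mul_nonneg hκ.le hdiffpos
  have hfinal1b : α*(-(K/δ) + 2*ε) = -(α*(K/δ)) + 2*(ε*α) := by ring
  rw [hsub] at hDt_le
  linarith only [hDt_le, ht1, hfinal1, hfinal1b, ht2, hKδ2N, hfx1, hfy1, hfinal2, hεN]

set_option maxHeartbeats 2000000 in
theorem dirichlet_weighted_norm_estimate
    (T : ℝ) (hT : 0 < T) (σ : ℝ → ℝ → ℝ)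
    (hA1 : CondA1 T σ) (hA4 : CondA4' T σ) :
    ∃ M > 0, ∀ κ > (1:ℝ), ∀ f : ℝ → ℝ → ℝ,
      (∃ C, ∀ x : ℝ, ∀ t ∈ Icc (0:ℝ) T, |f x t| ≤ C) →
      HolderOnCompacts (univ ×ˢ Icc 0 T) f →
      ∀ u : ℝ → ℝ → ℝ,
        RegC21 T u →
        (∀ x ∈ Ioi (0:ℝ), ∀ t ∈ Ico (0:ℝ) T,
          Dt u x t + σ x t ^ 2 / 2 * Dxx u x t + f x t = 0) →
        (∀ p ∈ parabBdry T, u p.1 p.2 = 0) →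
        (∃ C, ∀ x ∈ Ici (0:ℝ), ∀ t ∈ Icc (0:ℝ) T, |u x t| ≤ C) →
        ((∃ C, ∀ x ∈ Ioi (0:ℝ), ∀ t ∈ Ico (0:ℝ) T, |Dx u x t| ≤ C) ∧
          (∀ N : ℝ,
            (∀ x : ℝ, ∀ t ∈ Icc (0:ℝ) T, Real.exp (-κ * (T - t)) * |f x t| ≤ N) →
            ∀ x ∈ Ici (0:ℝ), ∀ t ∈ Ico (0:ℝ) T, ∀ x' ∈ Ioi (0:ℝ), ∀ t' ∈ Ico (0:ℝ) T,
              Real.exp (-κ * (T - t)) * |u x t| +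
                Real.exp (-κ * (T - t')) * |Dx u x' t'| ≤ M / κ ^ ((1:ℝ)/3) * N)) := by
  obtain ⟨⟨Cσ, hCσ⟩, ⟨m, hm0, hml⟩, -⟩ := hA1
  set α : ℝ := m^2/2 with hαdef
  have hα : 0 < α := by positivity
  set A : ℝ := Cσ^2/2 + 1 with hAdef
  have hA : 0 < A := by positivity
  have haIcc : ∀ x ∈ Ici (0:ℝ), ∀ t ∈ Icc (0:ℝ) T, α ≤ σ x t^2/2 ∧ σ x t^2/2 ≤ A := by
    intro x hx t ht
    have h1 := hml x t ht
    have h2 := hCσ x t ht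
    have h3 := abs_nonneg (σ x t)
    constructor
    · rw [hαdef]
      nlinarith [sq_abs (σ x t)]
    · rw [hAdef]
      nlinarith [sq_abs (σ x t)]
  have hsqα : 0 < Real.sqrt α := Real.sqrt_pos.2 hα
  refine ⟨5 + 2/α + 2/Real.sqrt α, by positivity, ?_⟩
  intro κ hκ1 f hfb hHol u hreg hpde hbdry hub
  have hκ : 0 < κ := lt_trans one_pos hκ1
  set lam : ℝ := Real.sqrt (κ/α) with hlamdef
  have hlam : 0 < lam := Real.sqrt_pos.2 (by positivity)
  have hαlam : κ ≤ α * lam^2 := by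
    rw [hlamdef, Real.sq_sqrt (by positivity : (0:ℝ) ≤ κ/α), mul_div_cancel₀ _ (ne_of_gt hα)]
  set dl : ℝ := 1/Real.sqrt κ with hdldef
  have hdl : 0 < dl := by positivity
  -- derivative packaging
  have hux : ∀ x ∈ Ioi (0:ℝ), ∀ t ∈ Ico (0:ℝ) T, HasDerivAt (fun y => u y t) (Dx u x t) x :=
    fun x hx t ht => ((hreg.2.1 x hx t ht).1).hasDerivAt
  have huxx : ∀ x ∈ Ioi (0:ℝ), ∀ t ∈ Ico (0:ℝ) T,
      HasDerivAt (fun y => Dx u y t) (Dxx u x t) x :=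
    fun x hx t ht => ((hreg.2.1 x hx t ht).2.1).hasDerivAt
  have hut : ∀ x ∈ Ioi (0:ℝ), ∀ t ∈ Ico (0:ℝ) T, HasDerivAt (fun s => u x s) (Dt u x t) t :=
    fun x hx t ht => ((hreg.2.1 x hx t ht).2.2).hasDerivAt
  have hbT : ∀ x ∈ Ici (0:ℝ), u x T = 0 := fun x hx => hbdry (x, T) (Or.inl ⟨hx, rfl⟩)
  have hb0 : ∀ t ∈ Icc (0:ℝ) T, u 0 t = 0 := fun t ht => hbdry (0, t) (Or.inr ⟨rfl, ht⟩)
  -- negated versions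
  have hcontN : ContinuousOn (fun p : ℝ×ℝ => -u p.1 p.2) (Ici 0 ×ˢ Icc 0 T) := hreg.1.neg
  have huxN : ∀ x ∈ Ioi (0:ℝ), ∀ t ∈ Ico (0:ℝ) T, HasDerivAt (fun y => -u y t) (-Dx u x t) x :=
    fun x hx t ht => (hux x hx t ht).neg
  have huxxN : ∀ x ∈ Ioi (0:ℝ), ∀ t ∈ Ico (0:ℝ) T,
      HasDerivAt (fun y => -Dx u y t) (-Dxx u x t) x :=
    fun x hx t ht => (huxx x hx t ht).neg
  have hutN : ∀ x ∈ Ioi (0:ℝ), ∀ t ∈ Ico (0:ℝ) T, HasDerivAt (fun s => -u x s) (-Dt u x t) t :=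
    fun x hx t ht => (hut x hx t ht).neg
  have hpdeN : ∀ x ∈ Ioi (0:ℝ), ∀ t ∈ Ico (0:ℝ) T,
      -Dt u x t + σ x t^2/2 * (-Dxx u x t) + (-f x t) = 0 := by
    intro x hx t ht
    have := hpde x hx t ht
    linarith
  have hbTN : ∀ x ∈ Ici (0:ℝ), -u x T = 0 := fun x hx => by rw [hbT x hx]; ring
  have hb0N : ∀ t ∈ Icc (0:ℝ) T, -u 0 t = 0 := fun t ht => by rw [hb0 t ht]; ring
  have hubN : ∃ C, ∀ x ∈ Ici (0:ℝ), ∀ t ∈ Icc (0:ℝ) T, |-u x t| ≤ C := by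
    obtain ⟨C, hC⟩ := hub
    exact ⟨C, fun x hx t ht => by rw [abs_neg]; exact hC x hx t ht⟩
  -- the two-sided barrier bound
  have master : ∀ N : ℝ, 0 ≤ N →
      (∀ x : ℝ, ∀ t ∈ Icc (0:ℝ) T, Real.exp (-κ*(T-t)) * |f x t| ≤ N) →
      ∀ x ∈ Ici (0:ℝ), ∀ t ∈ Icc (0:ℝ) T,
        |Real.exp (-κ*(T-t)) * u x t| ≤ N/κ * (1 - Real.exp (-lam*x)) := by
    intro N hN hfN x hx t ht
    have h1 := MP1 hT hκ hlam hα hαlam hA haIcc hreg.1 hut hux huxx hpde hbT hb0 hub hN hfN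
      x hx t ht
    have hfNn : ∀ x : ℝ, ∀ t ∈ Icc (0:ℝ) T, Real.exp (-κ*(T-t)) * |-f x t| ≤ N := by
      intro z s hs
      rw [abs_neg]
      exact hfN z s hs
    have h2 := MP1 (u := fun a b => -u a b) (ut := fun a b => -Dt u a b)
      (ux := fun a b => -Dx u a b) (uxx := fun a b => -Dxx u a b)
      (a := fun a b => σ a b^2/2) (f := fun a b => -f a b)
      hT hκ hlam hα hαlam hA haIcc hcontN hutN huxN huxxN hpdeN hbTN hb0N hubN hN hfNn
      x hx t ht
    rw [abs_le]
    constructor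
    · linarith [h2]
    · linarith [h1]
  -- the gradient bound
  have grad : ∀ N : ℝ, 0 < N →
      (∀ x : ℝ, ∀ t ∈ Icc (0:ℝ) T, Real.exp (-κ*(T-t)) * |f x t| ≤ N) →
      ∀ x' ∈ Ioi (0:ℝ), ∀ t' ∈ Ico (0:ℝ) T,
        Real.exp (-κ*(T-t')) * |Dx u x' t'| ≤ 2*N*dl/α + 4*N/(κ*dl) + 2*N*lam/κ := by
    intro N hN hfN x' hx' t' ht'
    have hbarN := master N hN.le hfN
    have hbarNn : ∀ x ∈ Ici (0:ℝ), ∀ t ∈ Icc (0:ℝ) T,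
        |Real.exp (-κ*(T-t)) * -u x t| ≤ N/κ * (1 - Real.exp (-lam*x)) := by
      intro z hz s hs
      rw [mul_neg, abs_neg]
      exact hbarN z hz s hs
    have hfNn : ∀ x : ℝ, ∀ t ∈ Icc (0:ℝ) T, Real.exp (-κ*(T-t)) * |-f x t| ≤ N := by
      intro z s hs
      rw [abs_neg]
      exact hfN z s hs
    have halow : ∀ x ∈ Ici (0:ℝ), ∀ t ∈ Icc (0:ℝ) T, α ≤ σ x t^2/2 :=
      fun x hx t ht => (haIcc x hx t ht).1
    have lip1 := MP2 hT hκ hlam hα hdl hN halow hreg.1 hut hux huxx hpde hbT hb0 hbarN hfN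
    have lip2 := MP2 (u := fun a b => -u a b) (ut := fun a b => -Dt u a b)
      (ux := fun a b => -Dx u a b) (uxx := fun a b => -Dxx u a b)
      (a := fun a b => σ a b^2/2) (f := fun a b => -f a b)
      hT hκ hlam hα hdl hN halow hcontN hutN huxN huxxN hpdeN hbTN hb0N hbarNn hfNn
    have hKnn : 0 ≤ 2*N*dl/α + 4*N/(κ*dl) + 2*N*lam/κ := by positivity
    have ht'Icc : t' ∈ Icc (0:ℝ) T := ⟨ht'.1, ht'.2.le⟩
    have hb : ∀ p : ℝ, |p - x'| ≤ min dl x' →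
        |Real.exp (-κ*(T-t'))*u p t' - Real.exp (-κ*(T-t'))*u x' t'|
          ≤ (2*N*dl/α + 4*N/(κ*dl) + 2*N*lam/κ) * |p - x'| := by
      intro p hp
      have habs1 : p - x' ≤ min dl x' := le_trans (le_abs_self _) hp
      have habs2 : x' - p ≤ min dl x' := by
        have h := neg_abs_le (p - x')
        linarith [hp]
      rcases le_total x' p with hc | hc
      · have hmem : p ∈ Icc x' (x'+dl) :=
          ⟨hc, by linarith [min_le_left dl x']⟩
        have l1 := lip1 t' ht'Icc x' (Set.mem_Ici.2 (le_of_lt (Set.mem_Ioi.1 hx'))) p hmem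
        have l2 := lip2 t' ht'Icc x' (Set.mem_Ici.2 (le_of_lt (Set.mem_Ioi.1 hx'))) p hmem
        have hφle : (p-x') - (p-x')^2/(2*dl) ≤ p - x' := by
          have h0 : 0 ≤ (p-x')^2/(2*dl) := by positivity
          linarith
        have hKφ : (2*N*dl/α + 4*N/(κ*dl) + 2*N*lam/κ)*((p-x') - (p-x')^2/(2*dl))
            ≤ (2*N*dl/α + 4*N/(κ*dl) + 2*N*lam/κ)*(p-x') :=
          mul_le_mul_of_nonneg_left hφle hKnn
        have habseq : |p - x'| = p - x' := abs_of_nonneg (by linarith)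
        rw [habseq, abs_le]
        constructor
        · linarith [l2, hKφ]
        · linarith [l1, hKφ]
      · have hp0 : 0 ≤ p := by
          have := min_le_right dl x'
          linarith
        have hmem : x' ∈ Icc p (p+dl) :=
          ⟨hc, by linarith [min_le_left dl x']⟩
        have l1 := lip1 t' ht'Icc p hp0 x' hmem
        have l2 := lip2 t' ht'Icc p hp0 x' hmem
        have hφle : (x'-p) - (x'-p)^2/(2*dl) ≤ x' - p := by
          have h0 : 0 ≤ (x'-p)^2/(2*dl) := by positivity
          linarith
        have hKφ : (2*N*dl/α + 4*N/(κ*dl) + 2*N*lam/κ)*((x'-p) - (x'-p)^2/(2*dl))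
            ≤ (2*N*dl/α + 4*N/(κ*dl) + 2*N*lam/κ)*(x'-p) :=
          mul_le_mul_of_nonneg_left hφle hKnn
        have habseq : |p - x'| = x' - p := by
          rw [abs_sub_comm]
          exact abs_of_nonneg (by linarith)
        rw [habseq, abs_le]
        constructor
        · linarith [l1, hKφ]
        · linarith [l2, hKφ]
    have hder : HasDerivAt (fun p => Real.exp (-κ*(T-t'))*u p t')
        (Real.exp (-κ*(T-t')) * Dx u x' t') x' :=
      (hux x' hx' t' ht').const_mul _
    have habsd := absDerivLe hder (lt_min hdl hx') hb
    rw [abs_mul, abs_of_pos (Real.exp_pos _)] at habsd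
    exact habsd
  -- the square-root algebra
  set s : ℝ := Real.sqrt κ with hsdef
  have hs : 0 < s := Real.sqrt_pos.2 hκ
  have hss : s*s = κ := Real.mul_self_sqrt hκ.le
  have hs1 : 1 ≤ s := by nlinarith
  have hsκ : s ≤ κ := by nlinarith
  have hlams : lam * Real.sqrt α = s := by
    rw [hlamdef, hsdef, ← Real.sqrt_mul (by positivity : (0:ℝ) ≤ κ/α)]
    congr 1
    field_simp
  have hKsum : ∀ N : ℝ, 0 ≤ N → 2*N*dl/α + 4*N/(κ*dl) + 2*N*lam/κ
      ≤ N/s*(4 + 2/α + 2/Real.sqrt α) := by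
    intro N hN
    have e1 : 2*N*dl/α = N/s*(2/α) := by
      rw [hdldef, hsdef]
      field_simp
    have e2 : 4*N/(κ*dl) = N/s*4 := by
      rw [hdldef]
      rw [← hss]
      field_simp
    have e3 : 2*N*lam/κ = N/s*(2/Real.sqrt α) := by
      have hlam2 : lam = s/Real.sqrt α := by
        rw [← hlams]
        field_simp
      rw [hlam2, ← hss]
      field_simp
    rw [e1, e2, e3]
    exact le_of_eq (by ring)
  have hpow13 : κ^((1:ℝ)/3) ≤ s := by
    rw [hsdef, Real.sqrt_eq_rpow]
    exact Real.rpow_le_rpow_of_exponent_le hκ1.le (by norm_num)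
  have hpowpos : 0 < κ^((1:ℝ)/3) := Real.rpow_pos_of_pos hκ _
  constructor
  · -- boundedness of the gradient
    obtain ⟨Cf, hCf⟩ := hfb
    have hCf0 : 0 ≤ Cf := le_trans (abs_nonneg _) (hCf 0 0 ⟨le_refl 0, hT.le⟩)
    have hN0 : 0 < Cf + 1 := by positivity
    have hfN0 : ∀ x : ℝ, ∀ t ∈ Icc (0:ℝ) T, Real.exp (-κ*(T-t)) * |f x t| ≤ Cf + 1 := by
      intro z sv hs2
      have h1 : Real.exp (-κ*(T-sv)) ≤ 1 := by
        rw [show (1:ℝ) = Real.exp 0 from Real.exp_zero.symm]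
        apply Real.exp_le_exp.2
        linarith only [mul_nonneg hκ.le (sub_nonneg.2 hs2.2)]
      have h2 := hCf z sv hs2
      have h3 := mul_le_mul_of_nonneg_right h1 (abs_nonneg (f z sv))
      linarith only [h3, h2]
    refine ⟨(2*(Cf+1)*dl/α + 4*(Cf+1)/(κ*dl) + 2*(Cf+1)*lam/κ) * Real.exp (κ*T), ?_⟩
    intro x' hx' t' ht'
    have h := grad (Cf+1) hN0 hfN0 x' hx' t' ht'
    have hE1 : Real.exp (-κ*(T-t')) * Real.exp (κ*(T-t')) = 1 := by
      rw [← Real.exp_add, show -κ*(T-t') + κ*(T-t') = 0 by ring, Real.exp_zero]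
    have h3 := mul_le_mul_of_nonneg_right h (Real.exp_pos (κ*(T-t'))).le
    have h4 : |Dx u x' t'| * (Real.exp (-κ*(T-t')) * Real.exp (κ*(T-t'))) = |Dx u x' t'| := by
      rw [hE1, mul_one]
    have h5 : |Dx u x' t'| ≤ (2*(Cf+1)*dl/α + 4*(Cf+1)/(κ*dl) + 2*(Cf+1)*lam/κ)
        * Real.exp (κ*(T-t')) := by
      linarith only [h3, h4]
    have h6 : Real.exp (κ*(T-t')) ≤ Real.exp (κ*T) :=
      Real.exp_le_exp.2 (by linarith only [mul_nonneg hκ.le ht'.1])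
    have hKnn : 0 ≤ 2*(Cf+1)*dl/α + 4*(Cf+1)/(κ*dl) + 2*(Cf+1)*lam/κ := by positivity
    exact le_trans h5 (mul_le_mul_of_nonneg_left h6 hKnn)
  · intro N hfN x hx t ht x' hx' t' ht'
    have hN0 : 0 ≤ N := le_trans (by positivity) (hfN 0 T ⟨hT.le, le_refl T⟩)
    rcases eq_or_lt_of_le hN0 with hNeq | hNpos
    · -- N = 0 : u vanishes
      have hu0 : ∀ z ∈ Ici (0:ℝ), ∀ sv ∈ Icc (0:ℝ) T, u z sv = 0 := by
        intro z hz sv hs2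
        have h1 := master N hN0 hfN z hz sv hs2
        rw [← hNeq] at h1
        have hz0 : (0:ℝ)/κ * (1 - Real.exp (-lam*z)) = 0 := by ring
        rw [hz0] at h1
        have h3 : Real.exp (-κ*(T-sv)) * u z sv = 0 :=
          abs_eq_zero.1 (le_antisymm h1 (abs_nonneg _))
        exact (mul_eq_zero.1 h3).resolve_left (ne_of_gt (Real.exp_pos _))
      have hDx0 : Dx u x' t' = 0 := by
        have hev : (fun y => u y t') =ᶠ[nhds x'] (fun _ => (0:ℝ)) := by
          filter_upwards [Ioi_mem_nhds hx'] with y hy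
          exact hu0 y (Set.mem_Ici.2 (le_of_lt (Set.mem_Ioi.1 hy))) t' ⟨ht'.1, ht'.2.le⟩
        have h1 : Dx u x' t' = deriv (fun _ => (0:ℝ)) x' := hev.deriv_eq
        rw [h1, deriv_const]
      have hu00 : u x t = 0 := hu0 x hx t ⟨ht.1, ht.2.le⟩
      rw [hu00, hDx0, ← hNeq]
      simp
    · have h1 := master N hN0 hfN x hx t ⟨ht.1, ht.2.le⟩
      have h2 := grad N hNpos hfN x' hx' t' ht'
      have hK := hKsum N hN0
      have h3 : N/κ * (1 - Real.exp (-lam*x)) ≤ N/κ := by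
        have h5 : 0 ≤ N/κ := by positivity
        linarith only [mul_nonneg h5 (Real.exp_pos (-lam*x)).le]
      have h6 : N/κ ≤ N/s := by
        rw [div_le_div_iff₀ hκ hs]
        linarith only [mul_le_mul_of_nonneg_left hsκ hN0]
      have h7 : Real.exp (-κ*(T-t)) * |u x t| = |Real.exp (-κ*(T-t)) * u x t| := by
        rw [abs_mul, abs_of_pos (Real.exp_pos _)]
      have h8 : Real.exp (-κ*(T-t)) * |u x t| + Real.exp (-κ*(T-t')) * |Dx u x' t'|
          ≤ N/s + N/s*(4 + 2/α + 2/Real.sqrt α) := by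
        rw [h7]
        linarith [h1, h2, hK, h3, h6]
      have h9 : N/s + N/s*(4 + 2/α + 2/Real.sqrt α) = (5 + 2/α + 2/Real.sqrt α)*N/s := by
        ring
      have h10 : (5 + 2/α + 2/Real.sqrt α)*N/s ≤ (5 + 2/α + 2/Real.sqrt α)*N/κ^((1:ℝ)/3) := by
        rw [div_le_div_iff₀ hs hpowpos]
        have hMN : 0 ≤ (5 + 2/α + 2/Real.sqrt α)*N := by positivity
        linarith only [mul_le_mul_of_nonneg_left hpow13 hMN]
      have h11 : (5 + 2/α + 2/Real.sqrt α)/κ^((1:ℝ)/3)*N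
          = (5 + 2/α + 2/Real.sqrt α)*N/κ^((1:ℝ)/3) := by
        ring
      rw [h11]
      linarith [h8, h9, h10]
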